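/- arXiv:1205.6971 — 6 statements merged into one kernel-verified Lean document; each statement's English description precedes it below -/
import Mathlib

section
/- Let $I$ be a monomial ideal in $S=\mathbb{K}[x_1,\dots,x_n]$. Then there exists an integer $k\geq 1$ such that for every monomial $u\in S$, $u$ lies in the integral closure $\overline{I}$ if and only if $u^k\in I^k$. -/
open MvPolynomial

noncomputable section

/-- `I` is a monomial ideal: it is generated by a set of monomials. -/
def IsMonomialIdeal {K : Type*} [Field K] {n : ℕ} (I : Ideal (MvPolynomial (Fin n) K)) : Prop :=
  ∃ A : Set (Fin n →₀ ℕ),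
    I = Ideal.span ((fun d => (monomial d (1 : K) : MvPolynomial (Fin n) K)) '' A)

/-- The integral closure of a monomial ideal `I`: the ideal generated by all monomials `u`
such that `u ^ m ∈ I ^ m` for some `m ≥ 1`. -/
def intCl {K : Type*} [Field K] {n : ℕ} (I : Ideal (MvPolynomial (Fin n) K)) :
    Ideal (MvPolynomial (Fin n) K) :=
  Ideal.span {u | (∃ d : Fin n →₀ ℕ, u = monomial d (1 : K)) ∧ ∃ m : ℕ, 1 ≤ m ∧ u ^ m ∈ I ^ m}

/-- The set of exponent vectors of monomials belonging to `I`. -/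
def monomialSet {K : Type*} [Field K] {n : ℕ} (I : Ideal (MvPolynomial (Fin n) K)) :
    Set (Fin n →₀ ℕ) :=
  {d | (monomial d (1 : K) : MvPolynomial (Fin n) K) ∈ I}

/-- The set of exponent vectors of the monomials in the Stanley space `a·K[Z]`. -/
def stanleySpace {n : ℕ} (a : Fin n →₀ ℕ) (Z : Finset (Fin n)) : Set (Fin n →₀ ℕ) :=
  {b | (∀ i, a i ≤ b i) ∧ ∀ i ∉ Z, b i = a i}

/-- `D` is a Stanley decomposition of the set of monomials `M`. -/
def IsStanleyDecomp {n : ℕ} (M : Set (Fin n →₀ ℕ))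
    (D : Finset ((Fin n →₀ ℕ) × Finset (Fin n))) : Prop :=
  (∀ p ∈ D, stanleySpace p.1 p.2 ⊆ M) ∧
  (∀ b ∈ M, ∃ p ∈ D, b ∈ stanleySpace p.1 p.2) ∧
  (∀ p ∈ D, ∀ q ∈ D, p ≠ q → Disjoint (stanleySpace p.1 p.2) (stanleySpace q.1 q.2))

/-- Stanley depth of a set of monomials. -/
def sdepthSet {n : ℕ} (M : Set (Fin n →₀ ℕ)) : ℕ :=
  sSup {k | k ≤ n ∧ ∃ D : Finset ((Fin n →₀ ℕ) × Finset (Fin n)),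
    IsStanleyDecomp M D ∧ ∀ p ∈ D, k ≤ p.2.card}

/-- Stanley depth of a monomial ideal `I` (as a module). -/
def sdepthI {K : Type*} [Field K] {n : ℕ} (I : Ideal (MvPolynomial (Fin n) K)) : ℕ :=
  sdepthSet (monomialSet I)

/-- Stanley depth of `S/I` for a monomial ideal `I`. -/
def sdepthQ {K : Type*} [Field K] {n : ℕ} (I : Ideal (MvPolynomial (Fin n) K)) : ℕ :=
  sdepthSet (monomialSet I)ᶜ

/-- Stanley depth of `I/J` for monomial ideals `J ⊆ I`. -/
def sdepthIJ {K : Type*} [Field K] {n : ℕ} (I J : Ideal (MvPolynomial (Fin n) K)) : ℕ :=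
  sdepthSet (monomialSet I \ monomialSet J)

theorem stmt0 {K : Type*} [Field K] {n : ℕ} (I : Ideal (MvPolynomial (Fin n) K))
    (hI : IsMonomialIdeal I) :
    ∃ k : ℕ, 1 ≤ k ∧ ∀ d : Fin n →₀ ℕ,
      ((monomial d (1 : K) : MvPolynomial (Fin n) K) ∈ intCl I ↔
        (monomial d (1 : K) : MvPolynomial (Fin n) K) ^ k ∈ I ^ k) := by
    classical
  set Mb : Set (Fin n →₀ ℕ) :=
    {e | ∃ m : ℕ, 1 ≤ m ∧ (monomial e (1 : K) : MvPolynomial (Fin n) K) ^ m ∈ I ^ m} with hMb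
  have hset : {u : MvPolynomial (Fin n) K |
      (∃ d : Fin n →₀ ℕ, u = monomial d (1 : K)) ∧ ∃ m : ℕ, 1 ≤ m ∧ u ^ m ∈ I ^ m}
      = (fun e => (monomial e (1 : K) : MvPolynomial (Fin n) K)) '' Mb := by
    ext u
    constructor
    · rintro ⟨⟨d, rfl⟩, hm⟩; exact ⟨d, hm, rfl⟩
    · rintro ⟨d, hd, rfl⟩; exact ⟨⟨d, rfl⟩, hd⟩
  have hcl : intCl I = Ideal.span ((fun e => (monomial e (1 : K) : MvPolynomial (Fin n) K)) '' Mb) := by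
    rw [intCl, hset]
  -- finite generating subset
  obtain ⟨S, hS⟩ : (intCl I).FG := IsNoetherian.noetherian _
  have hmem : ∀ s ∈ S, s ∈ Ideal.span ((fun e => (monomial e (1 : K) : MvPolynomial (Fin n) K)) '' Mb) := by
    intro s hs
    rw [← hcl, ← hS]
    exact Ideal.subset_span hs
  choose Tf hTf1 hTf2 using fun s (hs : s ∈ S) =>
    Submodule.mem_span_finite_of_mem_span (hmem s hs)
  set T : Finset (MvPolynomial (Fin n) K) := S.attach.biUnion (fun s => Tf s.1 s.2) with hT
  have hTsub : (T : Set (MvPolynomial (Fin n) K)) ⊆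
      (fun e => (monomial e (1 : K) : MvPolynomial (Fin n) K)) '' Mb := by
    intro u hu
    simp only [hT, Finset.coe_biUnion, Set.mem_iUnion, Finset.mem_coe, Finset.mem_biUnion] at hu
    obtain ⟨s, hs, hu⟩ := hu
    exact hTf1 s.1 s.2 hu
  have hspanT : intCl I = Ideal.span (T : Set (MvPolynomial (Fin n) K)) := by
    apply le_antisymm
    · rw [← hS]
      rw [Ideal.span_le]
      intro s hs
      have := hTf2 s hs
      refine Submodule.span_mono ?_ this
      intro u hu
      simp only [hT, Finset.coe_biUnion, Set.mem_iUnion, Finset.mem_coe, Finset.mem_biUnion]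
      exact ⟨⟨s, hs⟩, Finset.mem_attach _ _, hu⟩
    · rw [hcl, Ideal.span_le]
      intro u hu
      exact Ideal.subset_span (hTsub hu)
  -- exponent set of T
  set E : Set (Fin n →₀ ℕ) := {e | (monomial e (1 : K) : MvPolynomial (Fin n) K) ∈ T} with hE
  have hTE : (fun e => (monomial e (1 : K) : MvPolynomial (Fin n) K)) '' E
      = (T : Set (MvPolynomial (Fin n) K)) := by
    ext u
    constructor
    · rintro ⟨e, he, rfl⟩; exact he
    · intro hu
      obtain ⟨e, _, rfl⟩ := hTsub hu
      exact ⟨e, hu, rfl⟩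
  -- the uniform exponent
  set g : MvPolynomial (Fin n) K → ℕ := fun u =>
    if h : ∃ m : ℕ, 1 ≤ m ∧ u ^ m ∈ I ^ m then h.choose else 1 with hg
  set k : ℕ := ∏ u ∈ T, g u with hk
  have hk1 : 1 ≤ k := by
    rw [hk]
    refine Nat.one_le_iff_ne_zero.mpr (Finset.prod_ne_zero_iff.mpr ?_)
    intro u _
    rw [hg]
    dsimp only
    split
    · next h => exact Nat.one_le_iff_ne_zero.mp h.choose_spec.1
    · exact one_ne_zero
  refine ⟨k, hk1, fun d => ⟨fun hd => ?_, fun hd => ?_⟩⟩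
  · -- forward
    rw [hspanT, ← hTE, mem_ideal_span_monomial_image] at hd
    have hsupp : d ∈ (monomial d (1 : K) : MvPolynomial (Fin n) K).support := by
      rw [support_monomial, if_neg one_ne_zero]; exact Finset.mem_singleton_self d
    obtain ⟨e, he, hle⟩ := hd d hsupp
    -- e ∈ E, e ≤ d; e ∈ Mb
    have heMb : ∃ m : ℕ, 1 ≤ m ∧ (monomial e (1 : K) : MvPolynomial (Fin n) K) ^ m ∈ I ^ m := by
      obtain ⟨e', he', heq⟩ := hTsub he
      have : e' = e := monomial_left_injective (one_ne_zero (α := K)) heq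
      exact this ▸ he'
    set m : ℕ := heMb.choose with hm
    obtain ⟨hm1, hmI⟩ := heMb.choose_spec
    have hdvd : m ∣ k := by
      rw [hk]
      have : g (monomial e (1 : K)) = m := by
        rw [hg]; exact dif_pos heMb
      rw [← this]
      exact Finset.dvd_prod_of_mem g he
    obtain ⟨c, hc⟩ := hdvd
    have hek : (monomial e (1 : K) : MvPolynomial (Fin n) K) ^ k ∈ I ^ k := by
      rw [hc, pow_mul, pow_mul]
      exact Ideal.pow_mem_pow hmI c
    have hsplit : (monomial d (1 : K) : MvPolynomial (Fin n) K)
        = monomial e 1 * monomial (d - e) 1 := by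
      rw [monomial_mul, one_mul, add_tsub_cancel_of_le hle]
    rw [hsplit, mul_pow]
    exact Ideal.mul_mem_right _ _ hek
  · -- backward
    rw [intCl]
    exact Ideal.subset_span ⟨⟨d, rfl⟩, k, hk1, hd⟩
end
end

section
/- Let $J\subseteq I$ be monomial ideals in $S=\mathbb{K}[x_1,\dots,x_n]$. Then for every integer $k\geq 1$, $\mathrm{sdepth}(\overline{I^k}/\overline{J^k})\leq \mathrm{sdepth}(\overline{I}/\overline{J})$. -/
open MvPolynomial

noncomputable section

/-! ### Auxiliary lemmas -/

lemma aux_ceil_div_le_iff {k a c : ℕ} (hk : 1 ≤ k) : (a + k - 1) / k ≤ c ↔ a ≤ k * c := by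
  rw [Nat.div_le_iff_le_mul_add_pred (by omega)]
  omega

lemma aux_intCl_eq_span {K : Type*} [Field K] {n : ℕ} (I : Ideal (MvPolynomial (Fin n) K)) :
    intCl I = Ideal.span ((fun d => (monomial d (1 : K) : MvPolynomial (Fin n) K)) ''
      {d | ∃ m : ℕ, 1 ≤ m ∧ (monomial d (1 : K) : MvPolynomial (Fin n) K) ^ m ∈ I ^ m}) := by
  unfold intCl
  congr 1
  ext u
  constructor
  · rintro ⟨⟨d, rfl⟩, hm⟩
    exact ⟨d, hm, rfl⟩
  · rintro ⟨d, hm, rfl⟩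
    exact ⟨⟨d, rfl⟩, hm⟩

lemma aux_mem_monomialSet_intCl {K : Type*} [Field K] {n : ℕ}
    (I : Ideal (MvPolynomial (Fin n) K)) (d : Fin n →₀ ℕ) :
    d ∈ monomialSet (intCl I) ↔
      ∃ m : ℕ, 1 ≤ m ∧ (monomial (m • d) (1 : K) : MvPolynomial (Fin n) K) ∈ I ^ m := by
  have hpow : ∀ (e : Fin n →₀ ℕ) (m : ℕ),
      (monomial e (1 : K) : MvPolynomial (Fin n) K) ^ m = monomial (m • e) (1 : K) := by
    intro e m
    rw [monomial_pow, one_pow]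
  rw [monomialSet, Set.mem_setOf_eq, aux_intCl_eq_span, mem_ideal_span_monomial_image]
  constructor
  · intro h
    have hd : d ∈ (monomial d (1 : K) : MvPolynomial (Fin n) K).support := by
      rw [mem_support_iff, coeff_monomial, if_pos rfl]
      exact one_ne_zero
    obtain ⟨e, ⟨m, hm1, hm⟩, hle⟩ := h d hd
    refine ⟨m, hm1, ?_⟩
    have : (monomial d (1 : K) : MvPolynomial (Fin n) K) ^ m =
        (monomial e (1 : K)) ^ m * (monomial (d - e) (1 : K)) ^ m := by
      rw [← mul_pow, monomial_mul, one_mul, add_tsub_cancel_of_le hle]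
    rw [← hpow]
    rw [this]
    exact Ideal.mul_mem_right _ _ hm
  · rintro ⟨m, hm1, hm⟩
    intro xi hxi
    have : xi = d := by
      rw [mem_support_iff, coeff_monomial] at hxi
      by_contra hne
      rw [if_neg (fun h => hne h.symm)] at hxi
      exact hxi rfl
    subst this
    exact ⟨xi, ⟨m, hm1, by rw [hpow]; exact hm⟩, le_refl _⟩

lemma aux_smul_mem_iff {K : Type*} [Field K] {n : ℕ} (I : Ideal (MvPolynomial (Fin n) K))
    {k : ℕ} (hk : 1 ≤ k) (d : Fin n →₀ ℕ) :
    d ∈ monomialSet (intCl I) ↔ k • d ∈ monomialSet (intCl (I ^ k)) := by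
  rw [aux_mem_monomialSet_intCl, aux_mem_monomialSet_intCl]
  constructor
  · rintro ⟨m, hm1, hm⟩
    refine ⟨m, hm1, ?_⟩
    have : (monomial (m • d) (1 : K) : MvPolynomial (Fin n) K) ^ k =
        monomial (m • (k • d)) (1 : K) := by
      rw [monomial_pow, one_pow, smul_comm]
    rw [← this, ← pow_mul, mul_comm k m, pow_mul]
    exact Ideal.pow_mem_pow hm k
  · rintro ⟨m, hm1, hm⟩
    refine ⟨k * m, Nat.one_le_iff_ne_zero.mpr (Nat.mul_ne_zero (by omega) (by omega)), ?_⟩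
    rw [← pow_mul] at hm
    have h1 : m • (k • d) = (k * m) • d := by rw [smul_smul, mul_comm]
    have h2 : I ^ (k * m) = I ^ (m * k) := by rw [mul_comm]
    rw [h1] at hm
    rw [h2, mul_comm m k] at hm
    exact hm

/-- Scaling relation between Stanley depths. -/
lemma aux_sdepthSet_le {n k : ℕ} (hk : 1 ≤ k) (M Mk : Set (Fin n →₀ ℕ))
    (h : ∀ c, c ∈ M ↔ k • c ∈ Mk) : sdepthSet Mk ≤ sdepthSet M := by
  classical
  unfold sdepthSet
  set S1 := {s | s ≤ n ∧ ∃ D : Finset ((Fin n →₀ ℕ) × Finset (Fin n)),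
    IsStanleyDecomp Mk D ∧ ∀ p ∈ D, s ≤ p.2.card} with hS1
  set S2 := {s | s ≤ n ∧ ∃ D : Finset ((Fin n →₀ ℕ) × Finset (Fin n)),
    IsStanleyDecomp M D ∧ ∀ p ∈ D, s ≤ p.2.card} with hS2
  have hsub : S1 ⊆ S2 := by
    rintro s ⟨hsn, D, ⟨hDsub, hDcov, hDdisj⟩, hDcard⟩
    -- the "divide by k" map on exponent vectors
    have hzero : ∀ (p : (Fin n →₀ ℕ) × Finset (Fin n)) (i : Fin n),
        (fun i => if i ∈ p.2 then (p.1 i + k - 1) / k else p.1 i / k) i ≠ 0 → p.1 i ≠ 0 := by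
      intro p i hi
      simp only at hi
      intro h0
      rw [h0] at hi
      apply hi
      split
      · exact Nat.div_eq_of_lt (by omega)
      · exact Nat.zero_div k
    set φ : (Fin n →₀ ℕ) × Finset (Fin n) → (Fin n →₀ ℕ) × Finset (Fin n) :=
      fun p => (Finsupp.onFinset p.1.support
        (fun i => if i ∈ p.2 then (p.1 i + k - 1) / k else p.1 i / k)
        (fun i hi => Finsupp.mem_support_iff.mpr (hzero p i hi)), p.2) with hφ
    have hφ2 : ∀ p, (φ p).2 = p.2 := fun p => rfl
    have hφ1 : ∀ p i, (φ p).1 i = if i ∈ p.2 then (p.1 i + k - 1) / k else p.1 i / k := by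
      intro p i; rfl
    -- the key equivalence on Stanley spaces
    have hkey : ∀ p : (Fin n →₀ ℕ) × Finset (Fin n), (∀ i ∉ p.2, k ∣ p.1 i) →
        ∀ c, c ∈ stanleySpace (φ p).1 (φ p).2 ↔ k • c ∈ stanleySpace p.1 p.2 := by
      rintro p hdvd c
      simp only [stanleySpace, Set.mem_setOf_eq, hφ2, hφ1, Finsupp.smul_apply, smul_eq_mul]
      constructor
      · rintro ⟨hle, heq⟩
        constructor
        · intro i
          by_cases hi : i ∈ p.2
          · have := hle i
            rw [if_pos hi] at this
            exact (aux_ceil_div_le_iff hk).mp this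
          · obtain ⟨t, ht⟩ := hdvd i hi
            have := heq i hi
            rw [if_neg hi, ht, Nat.mul_div_cancel_left t (by omega)] at this
            rw [ht, this]
        · intro i hi
          obtain ⟨t, ht⟩ := hdvd i hi
          have := heq i hi
          rw [if_neg hi, ht, Nat.mul_div_cancel_left t (by omega)] at this
          rw [ht, this]
      · rintro ⟨hle, heq⟩
        constructor
        · intro i
          by_cases hi : i ∈ p.2
          · rw [if_pos hi]
            exact (aux_ceil_div_le_iff hk).mpr (hle i)
          · obtain ⟨t, ht⟩ := hdvd i hi
            have := heq i hi
            rw [ht] at this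
            have hct : c i = t := Nat.eq_of_mul_eq_mul_left (by omega) this
            rw [if_neg hi, ht, Nat.mul_div_cancel_left t (by omega), hct]
        · intro i hi
          obtain ⟨t, ht⟩ := hdvd i hi
          have := heq i hi
          rw [ht] at this
          have hct : c i = t := Nat.eq_of_mul_eq_mul_left (by omega) this
          rw [if_neg hi, ht, Nat.mul_div_cancel_left t (by omega), hct]
    set Df := D.filter (fun p => ∀ i ∉ p.2, k ∣ p.1 i) with hDf
    refine ⟨hsn, Df.image φ, ⟨?_, ?_, ?_⟩, ?_⟩
    · -- spaces contained in M
      intro q hq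
      obtain ⟨p, hp, rfl⟩ := Finset.mem_image.mp hq
      rw [Finset.mem_filter] at hp
      intro c hc
      rw [h c]
      exact hDsub p hp.1 ((hkey p hp.2 c).mp hc)
    · -- covering
      intro c hc
      obtain ⟨p, hp, hcp⟩ := hDcov (k • c) ((h c).mp hc)
      have hdvd : ∀ i ∉ p.2, k ∣ p.1 i := by
        intro i hi
        have := hcp.2 i hi
        rw [Finsupp.smul_apply, smul_eq_mul] at this
        exact ⟨c i, this.symm⟩
      exact ⟨φ p, Finset.mem_image.mpr ⟨p, Finset.mem_filter.mpr ⟨hp, hdvd⟩, rfl⟩,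
        (hkey p hdvd c).mpr hcp⟩
    · -- disjointness
      intro q1 hq1 q2 hq2 hne
      obtain ⟨p1, hp1, rfl⟩ := Finset.mem_image.mp hq1
      obtain ⟨p2, hp2, rfl⟩ := Finset.mem_image.mp hq2
      rw [Finset.mem_filter] at hp1 hp2
      have hpne : p1 ≠ p2 := fun hp => hne (by rw [hp])
      rw [Set.disjoint_left]
      intro c hc1 hc2
      have := hDdisj p1 hp1.1 p2 hp2.1 hpne
      rw [Set.disjoint_left] at this
      exact this ((hkey p1 hp1.2 c).mp hc1) ((hkey p2 hp2.2 c).mp hc2)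
    · -- cardinalities
      intro q hq
      obtain ⟨p, hp, rfl⟩ := Finset.mem_image.mp hq
      rw [Finset.mem_filter] at hp
      rw [hφ2]
      exact hDcard p hp.1
  rcases Set.eq_empty_or_nonempty S1 with hS | hS
  · rw [hS, csSup_empty]
    exact Nat.zero_le _
  · exact csSup_le_csSup ⟨n, fun x hx => hx.1⟩ hS hsub

theorem stmt6 {K : Type*} [Field K] {n : ℕ} (I J : Ideal (MvPolynomial (Fin n) K))
    (hI : IsMonomialIdeal I) (hJ : IsMonomialIdeal J) (hJI : J ≤ I) (k : ℕ) (hk : 1 ≤ k) :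
    sdepthIJ (intCl (I ^ k)) (intCl (J ^ k)) ≤ sdepthIJ (intCl I) (intCl J) := by
  unfold sdepthIJ
  apply aux_sdepthSet_le hk
  intro c
  simp only [Set.mem_diff]
  rw [aux_smul_mem_iff I hk c, aux_smul_mem_iff J hk c]
end
end

section
/- Let $I$ be a monomial ideal in $S=\mathbb{K}[x_1,\dots,x_n]$. Then for every integer $k\geq 1$, $\mathrm{sdepth}(\overline{I^k})\leq \mathrm{sdepth}(\overline{I})$ and $\mathrm{sdepth}(S/\overline{I^k})\leq \mathrm{sdepth}(S/\overline{I})$. -/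
open MvPolynomial

noncomputable section

/- ### Auxiliary lemmas -/

lemma cdiv_le_iff {a b k : ℕ} (hk : 1 ≤ k) : (a + k - 1) / k ≤ b ↔ a ≤ k * b := by
  rw [Nat.div_le_iff_le_mul_add_pred hk]
  generalize k * b = t
  omega

lemma cdiv_eq_iff {a b k : ℕ} (hk : 1 ≤ k) (h : k ∣ a) : b = (a + k - 1) / k ↔ k * b = a := by
  obtain ⟨q, rfl⟩ := h
  have h2 : (k * q + k - 1) / k = q := by
    rw [Nat.add_sub_assoc hk, Nat.mul_add_div (by omega : 0 < k),
      Nat.div_eq_of_lt (by omega), add_zero]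
  rw [h2]
  constructor
  · rintro rfl; rfl
  · intro h; exact Nat.eq_of_mul_eq_mul_left (by omega) h

lemma cdiv_zero_eq (k : ℕ) : (0 + k - 1) / k = 0 := by
  rcases Nat.eq_zero_or_pos k with h | h
  · simp [h]
  · exact Nat.div_eq_of_lt (by omega)

lemma space_iff {n k : ℕ} (hk : 1 ≤ k) (a : Fin n →₀ ℕ) (Z : Finset (Fin n))
    (hdvd : ∀ i ∉ Z, k ∣ a i) (b : Fin n →₀ ℕ) :
    b ∈ stanleySpace (Finsupp.mapRange (fun x => (x + k - 1) / k) (cdiv_zero_eq k) a) Z ↔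
      k • b ∈ stanleySpace a Z := by
  simp only [stanleySpace, Set.mem_setOf_eq, Finsupp.mapRange_apply, Finsupp.smul_apply,
    smul_eq_mul]
  constructor
  · rintro ⟨h1, h2⟩
    exact ⟨fun i => (cdiv_le_iff hk).mp (h1 i),
      fun i hi => (cdiv_eq_iff hk (hdvd i hi)).mp (h2 i hi)⟩
  · rintro ⟨h1, h2⟩
    exact ⟨fun i => (cdiv_le_iff hk).mpr (h1 i),
      fun i hi => (cdiv_eq_iff hk (hdvd i hi)).mpr (h2 i hi)⟩

lemma sdepth_le_of_smul {n k : ℕ} (hk : 1 ≤ k) (M₁ M₂ : Set (Fin n →₀ ℕ))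
    (H : ∀ b, b ∈ M₁ ↔ k • b ∈ M₂) : sdepthSet M₂ ≤ sdepthSet M₁ := by
  classical
  unfold sdepthSet
  set S₁ := {c | c ≤ n ∧ ∃ D : Finset ((Fin n →₀ ℕ) × Finset (Fin n)),
    IsStanleyDecomp M₁ D ∧ ∀ p ∈ D, c ≤ p.2.card} with hS₁
  set S₂ := {c | c ≤ n ∧ ∃ D : Finset ((Fin n →₀ ℕ) × Finset (Fin n)),
    IsStanleyDecomp M₂ D ∧ ∀ p ∈ D, c ≤ p.2.card} with hS₂
  have hsub : S₂ ⊆ S₁ := by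
    rintro c ⟨hcn, D, ⟨hins, hcov, hdisj⟩, hcard⟩
    set F : (Fin n →₀ ℕ) × Finset (Fin n) → (Fin n →₀ ℕ) × Finset (Fin n) :=
      fun p => (Finsupp.mapRange (fun x => (x + k - 1) / k) (cdiv_zero_eq k) p.1, p.2) with hF
    set D' := (D.filter (fun p => ∀ i ∉ p.2, k ∣ p.1 i)).image F with hD'
    refine ⟨hcn, D', ⟨?_, ?_, ?_⟩, ?_⟩
    · rintro p' hp'
      obtain ⟨p, hp, rfl⟩ := Finset.mem_image.mp hp'
      obtain ⟨hpD, hPdvd⟩ := Finset.mem_filter.mp hp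
      intro b hb
      exact (H b).mpr (hins p hpD ((space_iff hk p.1 p.2 hPdvd b).mp hb))
    · intro b hb
      obtain ⟨p, hpD, hbp⟩ := hcov (k • b) ((H b).mp hb)
      have hPdvd : ∀ i ∉ p.2, k ∣ p.1 i := by
        intro i hi
        refine ⟨b i, ?_⟩
        have := hbp.2 i hi
        simpa [Finsupp.smul_apply] using this.symm
      refine ⟨F p, Finset.mem_image.mpr ⟨p, Finset.mem_filter.mpr ⟨hpD, hPdvd⟩, rfl⟩, ?_⟩
      exact (space_iff hk p.1 p.2 hPdvd b).mpr hbp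
    · rintro p' hp' q' hq' hne
      obtain ⟨p, hp, rfl⟩ := Finset.mem_image.mp hp'
      obtain ⟨q, hq, rfl⟩ := Finset.mem_image.mp hq'
      obtain ⟨hpD, hpdvd⟩ := Finset.mem_filter.mp hp
      obtain ⟨hqD, hqdvd⟩ := Finset.mem_filter.mp hq
      have hpq : p ≠ q := fun h => hne (by rw [h])
      have hdj := hdisj p hpD q hqD hpq
      rw [Set.disjoint_left] at hdj ⊢
      intro b hbp hbq
      exact hdj ((space_iff hk p.1 p.2 hpdvd b).mp hbp)
        ((space_iff hk q.1 q.2 hqdvd b).mp hbq)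
    · rintro p' hp'
      obtain ⟨p, hp, rfl⟩ := Finset.mem_image.mp hp'
      exact hcard p (Finset.mem_filter.mp hp).1
  rcases Set.eq_empty_or_nonempty S₂ with h | h
  · rw [h, csSup_empty]
    exact Nat.zero_le _
  · exact csSup_le_csSup ⟨n, fun x hx => hx.1⟩ h hsub

lemma monomial_mem_intCl_iff {K : Type*} [Field K] {n : ℕ}
    (I : Ideal (MvPolynomial (Fin n) K)) (e : Fin n →₀ ℕ) :
    (monomial e (1 : K) : MvPolynomial (Fin n) K) ∈ intCl I ↔
      ∃ m : ℕ, 1 ≤ m ∧ (monomial e (1 : K) : MvPolynomial (Fin n) K) ^ m ∈ I ^ m := by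
  have hset : {u : MvPolynomial (Fin n) K |
      (∃ d : Fin n →₀ ℕ, u = monomial d (1 : K)) ∧ ∃ m : ℕ, 1 ≤ m ∧ u ^ m ∈ I ^ m}
      = (fun d => (monomial d (1 : K) : MvPolynomial (Fin n) K)) ''
        {d | ∃ m : ℕ, 1 ≤ m ∧ (monomial d (1 : K) : MvPolynomial (Fin n) K) ^ m ∈ I ^ m} := by
    ext u
    constructor
    · rintro ⟨⟨d, rfl⟩, h⟩; exact ⟨d, h, rfl⟩
    · rintro ⟨d, h, rfl⟩; exact ⟨⟨d, rfl⟩, h⟩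
  classical
  rw [intCl, hset, mem_ideal_span_monomial_image]
  constructor
  · intro h
    have he : e ∈ (monomial e (1 : K) : MvPolynomial (Fin n) K).support := by
      rw [support_monomial]
      simp
    obtain ⟨d, ⟨m, hm, hd⟩, hde⟩ := h e he
    refine ⟨m, hm, ?_⟩
    have heq : (monomial e (1 : K) : MvPolynomial (Fin n) K)
        = monomial d 1 * monomial (e - d) 1 := by
      rw [monomial_mul, one_mul, add_tsub_cancel_of_le hde]
    rw [heq, mul_pow]
    exact Ideal.mul_mem_right _ _ hd
  · intro h xi hxi
    rw [support_monomial, if_neg (one_ne_zero)] at hxi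
    rw [Finset.mem_singleton] at hxi
    subst hxi
    exact ⟨xi, h, le_refl _⟩

lemma key_iff {K : Type*} [Field K] {n : ℕ} (I : Ideal (MvPolynomial (Fin n) K))
    {k : ℕ} (hk : 1 ≤ k) (e : Fin n →₀ ℕ) :
    e ∈ monomialSet (intCl I) ↔ k • e ∈ monomialSet (intCl (I ^ k)) := by
  rw [monomialSet, Set.mem_setOf_eq, monomialSet, Set.mem_setOf_eq,
    monomial_mem_intCl_iff, monomial_mem_intCl_iff]
  have hmon : (monomial (k • e) (1 : K) : MvPolynomial (Fin n) K)
      = (monomial e (1 : K)) ^ k := by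
    rw [monomial_pow, one_pow]
  constructor
  · rintro ⟨m, hm, h⟩
    refine ⟨m, hm, ?_⟩
    have h2 : (I ^ m) ^ k = (I ^ k) ^ m := by rw [← pow_mul, mul_comm, pow_mul]
    have h3 : ((monomial e (1 : K) : MvPolynomial (Fin n) K) ^ m) ^ k
        = (monomial (k • e) (1 : K)) ^ m := by rw [← pow_mul, mul_comm, pow_mul, hmon]
    rw [← h3, ← h2]
    exact Ideal.pow_mem_pow h k
  · rintro ⟨m, hm, h⟩
    refine ⟨k * m, Nat.one_le_iff_ne_zero.mpr (by positivity), ?_⟩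
    have h3 : (monomial e (1 : K) : MvPolynomial (Fin n) K) ^ (k * m)
        = (monomial (k • e) (1 : K)) ^ m := by rw [pow_mul, ← hmon]
    rw [h3, pow_mul I]
    exact h

theorem stmt7 {K : Type*} [Field K] {n : ℕ} (I : Ideal (MvPolynomial (Fin n) K))
    (hI : IsMonomialIdeal I) (k : ℕ) (hk : 1 ≤ k) :
    sdepthI (intCl (I ^ k)) ≤ sdepthI (intCl I) ∧
    sdepthQ (intCl (I ^ k)) ≤ sdepthQ (intCl I) := by
  constructor
  · exact sdepth_le_of_smul hk _ _ (key_iff I hk)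
  · exact sdepth_le_of_smul hk _ _ (fun b => by
      simp only [Set.mem_compl_iff]
      exact not_congr (key_iff I hk b))
end
end

section
/- Let $I_2\subseteq I_1$ be monomial ideals in $S=\mathbb{K}[x_1,\dots,x_n]$. Then there exists an integer $k\geq 1$ such that for every integer $s\geq 1$, $\mathrm{sdepth}(I_1^{sk}/I_2^{sk})\leq \mathrm{sdepth}(\overline{I_1}/\overline{I_2})$. -/
open MvPolynomial

noncomputable section

-- arithmetic
lemma ceil_le_iff {c a b : ℕ} (hc : 1 ≤ c) : (a + c - 1) / c ≤ b ↔ a ≤ c * b := by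
  rw [Nat.div_le_iff_le_mul_add_pred hc]
  omega

lemma ceil_dvd {c a : ℕ} (hc : 1 ≤ c) (h : c ∣ a) : c * ((a + c - 1) / c) = a := by
  obtain ⟨m, rfl⟩ := h
  have h1 : c * m + c - 1 = (c - 1) + c * m := by omega
  rw [h1, Nat.add_mul_div_left _ _ hc, Nat.div_eq_of_lt (by omega)]
  ring

lemma preimage_space {n c : ℕ} (hc : 1 ≤ c) (a : Fin n →₀ ℕ) (Z : Finset (Fin n))
    (hne : ∃ b : Fin n →₀ ℕ, c • b ∈ stanleySpace a Z) :
    stanleySpace (a.mapRange (fun x => (x + c - 1) / c)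
      (by simp [Nat.div_eq_of_lt (show c - 1 < c by omega)]) ) Z
      = {b | c • b ∈ stanleySpace a Z} := by
  obtain ⟨b₀, hb₀1, hb₀2⟩ := hne
  have hdvd : ∀ i ∉ Z, c ∣ a i := by
    intro i hi
    refine ⟨b₀ i, ?_⟩
    have := hb₀2 i hi
    simpa [Finsupp.smul_apply, smul_eq_mul] using this.symm
  ext b
  simp only [stanleySpace, Set.mem_setOf_eq, Finsupp.mapRange_apply, Finsupp.smul_apply,
    smul_eq_mul]
  constructor
  · rintro ⟨h1, h2⟩
    refine ⟨fun i => (ceil_le_iff hc).mp (h1 i), fun i hi => ?_⟩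
    rw [h2 i hi, ceil_dvd hc (hdvd i hi)]
  · rintro ⟨h1, h2⟩
    refine ⟨fun i => (ceil_le_iff hc).mpr (h1 i), fun i hi => ?_⟩
    have h3 : c * ((a i + c - 1) / c) = a i := ceil_dvd hc (hdvd i hi)
    have h4 : c * b i = a i := h2 i hi
    exact Nat.eq_of_mul_eq_mul_left hc (by rw [h3, h4])

lemma sdepthSet_le_dilate {n c : ℕ} (hc : 1 ≤ c) (M : Set (Fin n →₀ ℕ)) :
    sdepthSet M ≤ sdepthSet {b | c • b ∈ M} := by
  classical
  have key : {k | k ≤ n ∧ ∃ D : Finset ((Fin n →₀ ℕ) × Finset (Fin n)),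
        IsStanleyDecomp M D ∧ ∀ p ∈ D, k ≤ p.2.card}
      ⊆ {k | k ≤ n ∧ ∃ D : Finset ((Fin n →₀ ℕ) × Finset (Fin n)),
        IsStanleyDecomp {b | c • b ∈ M} D ∧ ∀ p ∈ D, k ≤ p.2.card} := by
    rintro k ⟨hkn, D, ⟨hsub, hcov, hdisj⟩, hcard⟩
    set f : (Fin n →₀ ℕ) × Finset (Fin n) → (Fin n →₀ ℕ) × Finset (Fin n) :=
      fun p => (p.1.mapRange (fun x => (x + c - 1) / c)
        (by simp [Nat.div_eq_of_lt (show c - 1 < c by omega)]), p.2) with hf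
    set P : (Fin n →₀ ℕ) × Finset (Fin n) → Prop :=
      fun p => ∃ b : Fin n →₀ ℕ, c • b ∈ stanleySpace p.1 p.2 with hP
    set D' := (D.filter P).image f with hD'
    have hspace : ∀ p ∈ D.filter P,
        stanleySpace (f p).1 (f p).2 = {b | c • b ∈ stanleySpace p.1 p.2} := by
      intro p hp
      exact preimage_space hc _ _ (Finset.mem_filter.mp hp).2
    refine ⟨hkn, D', ⟨?_, ?_, ?_⟩, ?_⟩
    · intro q hq
      obtain ⟨p, hp, rfl⟩ := Finset.mem_image.mp hq
      rw [hspace p hp]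
      intro b hb
      exact hsub p (Finset.mem_filter.mp hp).1 hb
    · intro b hb
      obtain ⟨p, hp, hbp⟩ := hcov _ hb
      refine ⟨f p, Finset.mem_image_of_mem f (Finset.mem_filter.mpr ⟨hp, ⟨b, hbp⟩⟩), ?_⟩
      rw [hspace p (Finset.mem_filter.mpr ⟨hp, ⟨b, hbp⟩⟩)]
      exact hbp
    · intro q hq r hr hqr
      obtain ⟨p, hp, rfl⟩ := Finset.mem_image.mp hq
      obtain ⟨p', hp', rfl⟩ := Finset.mem_image.mp hr
      have hpp' : p ≠ p' := fun e => hqr (by rw [e])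
      rw [hspace p hp, hspace p' hp']
      rw [Set.disjoint_left]
      intro b hb1 hb2
      exact Set.disjoint_left.mp
        (hdisj p (Finset.mem_filter.mp hp).1 p' (Finset.mem_filter.mp hp').1 hpp') hb1 hb2
    · intro q hq
      obtain ⟨p, hp, rfl⟩ := Finset.mem_image.mp hq
      exact hcard p (Finset.mem_filter.mp hp).1
  unfold sdepthSet
  rcases Set.eq_empty_or_nonempty {k | k ≤ n ∧ ∃ D : Finset ((Fin n →₀ ℕ) × Finset (Fin n)),
      IsStanleyDecomp M D ∧ ∀ p ∈ D, k ≤ p.2.card} with hA | hA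
  · rw [hA, csSup_empty]
    exact Nat.zero_le _
  · exact csSup_le_csSup ⟨n, fun x hx => hx.1⟩ hA key

lemma pow_mem_of_dvd {R : Type*} [CommRing R] {I : Ideal R} {u : R} {m k : ℕ}
    (h : u ^ m ∈ I ^ m) (hdvd : m ∣ k) : u ^ k ∈ I ^ k := by
  obtain ⟨t, rfl⟩ := hdvd
  rw [pow_mul, pow_mul]
  exact Ideal.pow_mem_pow h t

lemma mono_div_of_mem_span {K : Type*} [Field K] {n : ℕ}
    {G : Set (MvPolynomial (Fin n) K)} (hG : ∀ u ∈ G, ∃ e : Fin n →₀ ℕ, u = monomial e (1 : K))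
    {d : Fin n →₀ ℕ} (hd : (monomial d (1 : K)) ∈ Ideal.span G) :
    ∃ e : Fin n →₀ ℕ, monomial e (1 : K) ∈ G ∧ e ≤ d := by
  rw [Ideal.span, Submodule.mem_span_set] at hd
  obtain ⟨f, hsupp, hsum⟩ := hd
  by_contra hcon
  push_neg at hcon
  have h0 : coeff d (monomial d (1 : K)) = 1 := by simp
  rw [← hsum, Finsupp.sum, coeff_sum] at h0
  have hz : ∀ u ∈ f.support, coeff d (f u • u) = 0 := by
    intro u hu
    obtain ⟨e, rfl⟩ := hG u (hsupp hu)
    rw [smul_eq_mul, coeff_mul_monomial', if_neg (hcon e (hsupp hu))]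
  rw [Finset.sum_eq_zero hz] at h0
  exact one_ne_zero h0.symm

lemma uniform {K : Type*} [Field K] {n : ℕ} (I : Ideal (MvPolynomial (Fin n) K)) :
    ∃ k : ℕ, 1 ≤ k ∧ ∀ d : Fin n →₀ ℕ,
      monomial d (1 : K) ∈ intCl I → (monomial d (1 : K)) ^ k ∈ I ^ k := by
  classical
  obtain ⟨T, hT⟩ := IsNoetherian.noetherian (intCl I)
  have hstep : ∀ t ∈ T, ∃ F : Finset (MvPolynomial (Fin n) K),
      ↑F ⊆ {u : MvPolynomial (Fin n) K |
        (∃ d : Fin n →₀ ℕ, u = monomial d (1 : K)) ∧ ∃ m : ℕ, 1 ≤ m ∧ u ^ m ∈ I ^ m} ∧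
      t ∈ Ideal.span (↑F : Set (MvPolynomial (Fin n) K)) := by
    intro t ht
    have h1 : t ∈ intCl I := by
      rw [← hT]
      exact Ideal.subset_span (Finset.mem_coe.mpr ht)
    exact Submodule.mem_span_finite_of_mem_span h1
  choose F hF1 hF2 using hstep
  set S₀ : Finset (MvPolynomial (Fin n) K) := T.attach.biUnion (fun t => F t.1 t.2) with hS₀
  have hS₀S : ∀ u ∈ S₀, (∃ d : Fin n →₀ ℕ, u = monomial d (1 : K)) ∧
      ∃ m : ℕ, 1 ≤ m ∧ u ^ m ∈ I ^ m := by
    intro u hu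
    obtain ⟨t, _, hu'⟩ := Finset.mem_biUnion.mp hu
    exact hF1 t.1 t.2 hu'
  have hspan : intCl I ≤ Ideal.span (↑S₀ : Set (MvPolynomial (Fin n) K)) := by
    rw [← hT, show (Submodule.span (MvPolynomial (Fin n) K) (↑T : Set (MvPolynomial (Fin n) K))) = Ideal.span ↑T from rfl, Ideal.span_le]
    intro t ht
    refine Ideal.span_mono ?_ (hF2 t ht)
    exact_mod_cast Finset.subset_biUnion_of_mem (fun t => F t.1 t.2)
      (Finset.mem_attach T ⟨t, ht⟩)
  have hdata : ∀ u ∈ S₀, ∃ m : ℕ, 1 ≤ m ∧ u ^ m ∈ I ^ m := fun u hu => (hS₀S u hu).2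
  choose m hm hpow using hdata
  refine ⟨∏ x ∈ S₀.attach, m x.1 x.2, Finset.one_le_prod' (fun x _ => hm x.1 x.2), ?_⟩
  intro d hd
  obtain ⟨e', he'G, he'd⟩ := mono_div_of_mem_span
    (G := (↑S₀ : Set (MvPolynomial (Fin n) K)))
    (fun u hu => (hS₀S u (Finset.mem_coe.mp hu)).1) (hspan hd)
  have hu : monomial e' (1 : K) ∈ S₀ := Finset.mem_coe.mp he'G
  have hdvd : m _ hu ∣ ∏ x ∈ S₀.attach, m x.1 x.2 :=
    Finset.dvd_prod_of_mem (fun x => m x.1 x.2) (Finset.mem_attach S₀ ⟨_, hu⟩)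
  have hk : (monomial e' (1 : K)) ^ (∏ x ∈ S₀.attach, m x.1 x.2)
      ∈ I ^ (∏ x ∈ S₀.attach, m x.1 x.2) := pow_mem_of_dvd (hpow _ hu) hdvd
  have hfac : monomial d (1 : K) = monomial e' (1 : K) * monomial (d - e') (1 : K) := by
    rw [monomial_mul, one_mul, add_tsub_cancel_of_le he'd]
  rw [hfac, mul_pow]
  exact Ideal.mul_mem_right _ _ hk

theorem stmt9 {K : Type*} [Field K] {n : ℕ} (I₁ I₂ : Ideal (MvPolynomial (Fin n) K))
    (hI₁ : IsMonomialIdeal I₁) (hI₂ : IsMonomialIdeal I₂) (h : I₂ ≤ I₁) :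
    ∃ k : ℕ, 1 ≤ k ∧ ∀ s : ℕ, 1 ≤ s →
      sdepthIJ (I₁ ^ (s * k)) (I₂ ^ (s * k)) ≤ sdepthIJ (intCl I₁) (intCl I₂) := by
  obtain ⟨k₁, hk₁, H₁⟩ := uniform I₁
  obtain ⟨k₂, hk₂, H₂⟩ := uniform I₂
  refine ⟨k₁ * k₂, Nat.one_le_iff_ne_zero.mpr (Nat.mul_ne_zero (by omega) (by omega)), ?_⟩
  intro s hs
  set c := s * (k₁ * k₂) with hcdef
  have hc : 1 ≤ c := by
    have := Nat.mul_le_mul hs (Nat.mul_le_mul hk₁ hk₂)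
    simpa using this
  have hd1 : k₁ ∣ c := ⟨s * k₂, by rw [hcdef]; ring⟩
  have hd2 : k₂ ∣ c := ⟨s * k₁, by rw [hcdef]; ring⟩
  have hiff : ∀ (I : Ideal (MvPolynomial (Fin n) K)) (k₀ : ℕ),
      (∀ d : Fin n →₀ ℕ, monomial d (1 : K) ∈ intCl I → (monomial d (1 : K)) ^ k₀ ∈ I ^ k₀) →
      k₀ ∣ c →
      ∀ d : Fin n →₀ ℕ, (monomial d (1 : K) ∈ intCl I ↔ (monomial d (1 : K)) ^ c ∈ I ^ c) := by
    intro I k₀ H hdvd d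
    constructor
    · intro hd
      exact pow_mem_of_dvd (H d hd) hdvd
    · intro hd
      exact Ideal.subset_span ⟨⟨d, rfl⟩, c, hc, hd⟩
  have hset : {b : Fin n →₀ ℕ | c • b ∈ monomialSet (I₁ ^ c) \ monomialSet (I₂ ^ c)}
      = monomialSet (intCl I₁) \ monomialSet (intCl I₂) := by
    ext b
    have hmono : (monomial (c • b) (1 : K)) = (monomial b (1 : K)) ^ c := by
      rw [monomial_pow, one_pow]
    simp only [Set.mem_setOf_eq, Set.mem_diff, monomialSet, hmono]
    rw [← hiff I₁ k₁ H₁ hd1 b, ← hiff I₂ k₂ H₂ hd2 b]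
  calc sdepthIJ (I₁ ^ c) (I₂ ^ c)
      = sdepthSet (monomialSet (I₁ ^ c) \ monomialSet (I₂ ^ c)) := rfl
    _ ≤ sdepthSet {b : Fin n →₀ ℕ | c • b ∈ monomialSet (I₁ ^ c) \ monomialSet (I₂ ^ c)} :=
        sdepthSet_le_dilate hc _
    _ = sdepthIJ (intCl I₁) (intCl I₂) := by rw [hset]; rfl
end
end

section
/- Let $I$ be a monomial ideal in $S=\mathbb{K}[x_1,\dots,x_n]$. Then $\min_k\{\mathrm{sdepth}(S/I^k)\}\leq\mathrm{sdepth}(S/\overline{I})$ and $\min_k\{\mathrm{sdepth}(I^k)\}\leq\mathrm{sdepth}(\overline{I})$, where the minima are taken over all integers $k\geq 1$. -/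
open MvPolynomial

noncomputable section

namespace StanleyAux

variable {K : Type*} [Field K] {n : ℕ}

/-- Dilation of a set of exponent vectors. -/
def dil (k : ℕ) (M : Set (Fin n →₀ ℕ)) : Set (Fin n →₀ ℕ) := {b | k • b ∈ M}

lemma mem_dil {k : ℕ} {M : Set (Fin n →₀ ℕ)} {b : Fin n →₀ ℕ} : b ∈ dil k M ↔ k • b ∈ M :=
  Iff.rfl

lemma dil_compl (k : ℕ) (M : Set (Fin n →₀ ℕ)) : dil k Mᶜ = (dil k M)ᶜ := rfl

/-- The transformed base point of a Stanley space under dilation. -/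
def dpt (k : ℕ) (a : Fin n →₀ ℕ) (Z : Finset (Fin n)) : Fin n →₀ ℕ :=
  Finsupp.equivFunOnFinite.symm fun i => if i ∈ Z then (a i + k - 1) / k else a i / k

lemma dpt_apply (k : ℕ) (a : Fin n →₀ ℕ) (Z : Finset (Fin n)) (i : Fin n) :
    dpt k a Z i = if i ∈ Z then (a i + k - 1) / k else a i / k := rfl

lemma ceil_le {k a b : ℕ} (hk : 0 < k) : (a + k - 1) / k ≤ b ↔ a ≤ k * b := by
  rw [Nat.div_le_iff_le_mul_add_pred hk]
  omega

lemma dil_stanleySpace {k : ℕ} (hk : 0 < k) {a : Fin n →₀ ℕ} {Z : Finset (Fin n)}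
    (hg : ∀ i ∉ Z, k ∣ a i) :
    dil k (stanleySpace a Z) = stanleySpace (dpt k a Z) Z := by
  ext b
  simp only [mem_dil, stanleySpace, Set.mem_setOf_eq, Finsupp.smul_apply, smul_eq_mul,
    dpt_apply]
  constructor
  · rintro ⟨h1, h2⟩
    constructor
    · intro i
      by_cases hi : i ∈ Z
      · simpa [hi] using (ceil_le hk).2 (h1 i)
      · have h := h2 i hi
        simp only [hi, if_neg, if_false]
        rw [← h, Nat.mul_div_cancel_left _ hk]
    · intro i hi
      have h := h2 i hi
      simp only [hi, if_false]
      rw [← h, Nat.mul_div_cancel_left _ hk]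
  · rintro ⟨h1, h2⟩
    constructor
    · intro i
      by_cases hi : i ∈ Z
      · exact (ceil_le hk).1 (by simpa [hi] using h1 i)
      · have h := h2 i hi
        simp only [hi, if_false] at h
        rw [h, Nat.mul_div_cancel' (hg i hi)]
    · intro i hi
      have h := h2 i hi
      simp only [hi, if_false] at h
      rw [h, Nat.mul_div_cancel' (hg i hi)]

lemma dil_stanleySpace_empty {k : ℕ} {a : Fin n →₀ ℕ} {Z : Finset (Fin n)}
    {i0 : Fin n} (hi0 : i0 ∉ Z) (hnd : ¬ k ∣ a i0) :
    dil k (stanleySpace a Z) = ∅ := by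
  ext b
  simp only [mem_dil, stanleySpace, Set.mem_setOf_eq, Set.mem_empty_iff_false, iff_false,
    not_and]
  intro _ h2
  have h := h2 i0 hi0
  rw [Finsupp.smul_apply, smul_eq_mul] at h
  exact absurd ⟨b i0, h.symm⟩ hnd

lemma sdepthSet_le_dil (k : ℕ) (hk : 0 < k) (M : Set (Fin n →₀ ℕ)) :
    sdepthSet M ≤ sdepthSet (dil k M) := by
  classical
  unfold sdepthSet
  rcases Set.eq_empty_or_nonempty {j | j ≤ n ∧ ∃ D : Finset ((Fin n →₀ ℕ) × Finset (Fin n)),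
      IsStanleyDecomp M D ∧ ∀ p ∈ D, j ≤ p.2.card} with h | h
  · rw [h, csSup_empty]
    exact bot_le
  refine csSup_le_csSup ⟨n, fun j hj => hj.1⟩ h ?_
  rintro j ⟨hjn, D, ⟨hsub, hcov, hdisj⟩, hcard⟩
  refine ⟨hjn, (D.filter (fun p => ∀ i ∉ p.2, k ∣ p.1 i)).image
      (fun p => (dpt k p.1 p.2, p.2)), ⟨?_, ?_, ?_⟩, ?_⟩
  · rintro p' hp'
    rw [Finset.mem_image] at hp'
    obtain ⟨p, hp, rfl⟩ := hp'
    rw [Finset.mem_filter] at hp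
    rw [← dil_stanleySpace hk hp.2]
    intro b hb
    exact hsub p hp.1 hb
  · intro b hb
    obtain ⟨p, hp, hbp⟩ := hcov (k • b) hb
    have hgood : ∀ i ∉ p.2, k ∣ p.1 i := by
      intro i hi
      have := hbp.2 i hi
      rw [Finsupp.smul_apply, smul_eq_mul] at this
      exact ⟨b i, this.symm⟩
    refine ⟨(dpt k p.1 p.2, p.2), Finset.mem_image.2 ⟨p, Finset.mem_filter.2 ⟨hp, hgood⟩, rfl⟩, ?_⟩
    have : b ∈ dil k (stanleySpace p.1 p.2) := hbp
    rwa [dil_stanleySpace hk hgood] at this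
  · rintro p' hp' q' hq' hne
    rw [Finset.mem_image] at hp' hq'
    obtain ⟨p, hp, rfl⟩ := hp'
    obtain ⟨q, hq, rfl⟩ := hq'
    rw [Finset.mem_filter] at hp hq
    have hpq : p ≠ q := by rintro rfl; exact hne rfl
    rw [← dil_stanleySpace hk hp.2, ← dil_stanleySpace hk hq.2]
    have hd := hdisj p hp.1 q hq.1 hpq
    rw [Set.disjoint_left] at hd ⊢
    intro b hbp hbq
    exact hd hbp hbq
  · rintro p' hp'
    rw [Finset.mem_image] at hp'
    obtain ⟨p, hp, rfl⟩ := hp'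
    rw [Finset.mem_filter] at hp
    exact hcard p hp.1

lemma monomial_mem_span {A : Set (Fin n →₀ ℕ)} {d : Fin n →₀ ℕ} :
    (monomial d (1 : K) ∈
      Ideal.span ((fun e => (monomial e (1 : K) : MvPolynomial (Fin n) K)) '' A)) ↔
    ∃ a ∈ A, a ≤ d := by
  rw [mem_ideal_span_monomial_image]
  classical
  simp [support_monomial]

lemma monomialSet_upclosed {J : Ideal (MvPolynomial (Fin n) K)} (hJ : IsMonomialIdeal J)
    {d e : Fin n →₀ ℕ} (hde : d ≤ e) (hd : d ∈ monomialSet J) : e ∈ monomialSet J := by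
  obtain ⟨A, rfl⟩ := hJ
  rw [monomialSet, Set.mem_setOf_eq, monomial_mem_span] at hd ⊢
  obtain ⟨a, ha, had⟩ := hd
  exact ⟨a, ha, le_trans had hde⟩

open Pointwise in
lemma isMonomialIdeal_mul {I J : Ideal (MvPolynomial (Fin n) K)}
    (hI : IsMonomialIdeal I) (hJ : IsMonomialIdeal J) : IsMonomialIdeal (I * J) := by
  obtain ⟨A, rfl⟩ := hI
  obtain ⟨B, rfl⟩ := hJ
  refine ⟨A + B, ?_⟩
  rw [Ideal.span_mul_span']
  congr 1
  ext u
  constructor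
  · rintro ⟨_, ⟨a, ha, rfl⟩, _, ⟨b, hb, rfl⟩, rfl⟩
    exact ⟨a + b, ⟨a, ha, b, hb, rfl⟩, by simp [monomial_mul]⟩
  · rintro ⟨e, ⟨a, ha, b, hb, rfl⟩, rfl⟩
    exact ⟨monomial a 1, ⟨a, ha, rfl⟩, monomial b 1, ⟨b, hb, rfl⟩,
      by simp [monomial_mul]⟩

lemma isMonomialIdeal_pow {I : Ideal (MvPolynomial (Fin n) K)}
    (hI : IsMonomialIdeal I) (k : ℕ) : IsMonomialIdeal (I ^ k) := by
  induction k with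
  | zero =>
    refine ⟨{0}, ?_⟩
    simp [Ideal.span_singleton_one, monomial_zero']
  | succ k ih =>
    rw [pow_succ]
    exact isMonomialIdeal_mul ih hI

/-- The exponent set generating the integral closure. -/
def Bset (I : Ideal (MvPolynomial (Fin n) K)) : Set (Fin n →₀ ℕ) :=
  {d | ∃ m : ℕ, 1 ≤ m ∧ (monomial d (1 : K) : MvPolynomial (Fin n) K) ^ m ∈ I ^ m}

lemma intCl_eq (I : Ideal (MvPolynomial (Fin n) K)) :
    intCl I = Ideal.span ((fun d => (monomial d (1 : K) : MvPolynomial (Fin n) K)) '' Bset I) := by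
  unfold intCl
  congr 1
  ext u
  constructor
  · rintro ⟨⟨d, rfl⟩, m, hm, hu⟩
    exact ⟨d, ⟨m, hm, hu⟩, rfl⟩
  · rintro ⟨d, ⟨m, hm, hu⟩, rfl⟩
    exact ⟨⟨d, rfl⟩, m, hm, hu⟩

lemma smul_le_smul {k : ℕ} {d e : Fin n →₀ ℕ} (h : d ≤ e) : k • d ≤ k • e := by
  rw [Finsupp.le_def] at h ⊢
  intro i
  simp only [Finsupp.smul_apply, smul_eq_mul]
  exact Nat.mul_le_mul_left k (h i)

lemma mem_Bset_iff {I : Ideal (MvPolynomial (Fin n) K)} {d : Fin n →₀ ℕ} :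
    d ∈ Bset I ↔ ∃ m : ℕ, 1 ≤ m ∧ (monomial (m • d) (1 : K) : MvPolynomial (Fin n) K) ∈ I ^ m := by
  unfold Bset
  simp only [Set.mem_setOf_eq, monomial_pow, one_pow]

lemma monomialSet_intCl {I : Ideal (MvPolynomial (Fin n) K)} (hI : IsMonomialIdeal I) :
    monomialSet (intCl I) = Bset I := by
  ext d
  rw [monomialSet, Set.mem_setOf_eq, intCl_eq, monomial_mem_span]
  constructor
  · rintro ⟨e, he, hed⟩
    rw [mem_Bset_iff] at he ⊢
    obtain ⟨m, hm, hmem⟩ := he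
    exact ⟨m, hm, monomialSet_upclosed (isMonomialIdeal_pow hI m) (smul_le_smul hed) hmem⟩
  · intro hd
    exact ⟨d, hd, le_refl d⟩

lemma exists_finset_subset_span_eq {S : Set (MvPolynomial (Fin n) K)} :
    ∃ T : Finset (MvPolynomial (Fin n) K), ↑T ⊆ S ∧ Ideal.span S = Ideal.span (T : Set _) := by
  classical
  have hfg : (Ideal.span S).FG := IsNoetherian.noetherian _
  obtain ⟨G, hG⟩ := hfg
  choose T hT1 hT2 using fun g : {x // x ∈ G} =>
    Submodule.mem_span_finite_of_mem_span
      (show (g : MvPolynomial (Fin n) K) ∈ Ideal.span S from by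
        rw [← hG]; exact Ideal.subset_span g.2)
  have hsub : ↑(G.attach.biUnion T) ⊆ S := by
    intro x hx
    rw [Finset.mem_coe, Finset.mem_biUnion] at hx
    obtain ⟨g, _, hxg⟩ := hx
    exact hT1 g (Finset.mem_coe.2 hxg)
  refine ⟨G.attach.biUnion T, hsub, ?_⟩
  refine le_antisymm ?_ (Ideal.span_mono hsub)
  rw [← hG, Ideal.span_le]
  intro g hg
  have := hT2 ⟨g, hg⟩
  refine Submodule.span_mono ?_ this
  intro x hx
  rw [Finset.mem_coe] at hx ⊢
  exact Finset.mem_biUnion.2 ⟨⟨g, hg⟩, Finset.mem_attach _ _, hx⟩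

lemma exists_finset_exponents (B : Set (Fin n →₀ ℕ)) :
    ∃ F : Finset (Fin n →₀ ℕ), ↑F ⊆ B ∧
      Ideal.span ((fun d => (monomial d (1 : K) : MvPolynomial (Fin n) K)) '' B) =
      Ideal.span ((fun d => (monomial d (1 : K) : MvPolynomial (Fin n) K)) '' ↑F) := by
  classical
  obtain ⟨T, hTsub, hTspan⟩ :=
    exists_finset_subset_span_eq
      (S := (fun d => (monomial d (1 : K) : MvPolynomial (Fin n) K)) '' B)
  choose e he1 he2 using fun u : {x // x ∈ T} => hTsub u.2
  refine ⟨T.attach.image e, ?_, ?_⟩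
  · intro d hd
    rw [Finset.coe_image] at hd
    obtain ⟨u, _, rfl⟩ := hd
    exact he1 u
  · rw [hTspan]
    congr 1
    ext x
    constructor
    · intro hx
      have hxT : x ∈ T := Finset.mem_coe.1 hx
      exact ⟨e ⟨x, hxT⟩,
        Finset.mem_coe.2 (Finset.mem_image.2 ⟨⟨x, hxT⟩, Finset.mem_attach _ _, rfl⟩),
        he2 ⟨x, hxT⟩⟩
    · rintro ⟨d, hd, rfl⟩
      have : d ∈ T.attach.image e := Finset.mem_coe.1 hd
      obtain ⟨u, _, rfl⟩ := Finset.mem_image.1 this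
      rw [Finset.mem_coe]
      rw [he2 u]
      exact u.2

lemma exists_k {I : Ideal (MvPolynomial (Fin n) K)} (hI : IsMonomialIdeal I) :
    ∃ k : ℕ, 1 ≤ k ∧ monomialSet (intCl I) = dil k (monomialSet (I ^ k)) := by
  classical
  obtain ⟨F, hFsub, hFspan⟩ := exists_finset_exponents (K := K) (Bset I)
  set g : (Fin n →₀ ℕ) → ℕ := fun d => if h : d ∈ Bset I then h.choose else 1 with hg
  have hg1 : ∀ d, 1 ≤ g d := by
    intro d
    by_cases h : d ∈ Bset I
    · simp only [hg, dif_pos h]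
      exact h.choose_spec.1
    · simp [hg, dif_neg h]
  have hgmem : ∀ d ∈ Bset I,
      (monomial d (1 : K) : MvPolynomial (Fin n) K) ^ (g d) ∈ I ^ (g d) := by
    intro d h
    simp only [hg, dif_pos h]
    exact h.choose_spec.2
  set k := (F.sup g).factorial with hk
  have hk1 : 1 ≤ k := Nat.factorial_pos _
  have hkey : ∀ d ∈ F, (monomial (k • d) (1 : K) : MvPolynomial (Fin n) K) ∈ I ^ k := by
    intro d hdF
    have hdB : d ∈ Bset I := hFsub (Finset.mem_coe.2 hdF)
    have hdvd : g d ∣ k := Nat.dvd_factorial (hg1 d) (Finset.le_sup hdF)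
    obtain ⟨t, ht⟩ := hdvd
    have h1 : ((monomial d (1 : K) : MvPolynomial (Fin n) K) ^ (g d)) ^ t ∈ (I ^ (g d)) ^ t :=
      Ideal.pow_mem_pow (hgmem d hdB) t
    rw [← pow_mul, ← pow_mul, ← ht] at h1
    rwa [monomial_pow, one_pow] at h1
  refine ⟨k, hk1, ?_⟩
  ext d
  rw [monomialSet_intCl hI, mem_dil]
  constructor
  · intro hd
    have hmono : (monomial d (1 : K) : MvPolynomial (Fin n) K) ∈
        Ideal.span ((fun e => (monomial e (1 : K) : MvPolynomial (Fin n) K)) '' ↑F) := by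
      rw [← hFspan]
      exact monomial_mem_span.2 ⟨d, hd, le_refl d⟩
    obtain ⟨e, heF, hed⟩ := monomial_mem_span.1 hmono
    have hke : (monomial (k • e) (1 : K) : MvPolynomial (Fin n) K) ∈ I ^ k :=
      hkey e (Finset.mem_coe.1 heF)
    exact monomialSet_upclosed (isMonomialIdeal_pow hI k) (smul_le_smul hed) hke
  · intro hd
    rw [mem_Bset_iff]
    exact ⟨k, hk1, hd⟩

end StanleyAux

theorem stmt10 {K : Type*} [Field K] {n : ℕ} (I : Ideal (MvPolynomial (Fin n) K))
    (hI : IsMonomialIdeal I) :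
    sInf {m | ∃ k : ℕ, 1 ≤ k ∧ m = sdepthQ (I ^ k)} ≤ sdepthQ (intCl I) ∧
    sInf {m | ∃ k : ℕ, 1 ≤ k ∧ m = sdepthI (I ^ k)} ≤ sdepthI (intCl I) := by
  obtain ⟨k, hk1, hEq⟩ := StanleyAux.exists_k hI
  constructor
  · refine le_trans (Nat.sInf_le ⟨k, hk1, rfl⟩) ?_
    unfold sdepthQ
    rw [hEq, ← StanleyAux.dil_compl]
    exact StanleyAux.sdepthSet_le_dil k hk1 _
  · refine le_trans (Nat.sInf_le ⟨k, hk1, rfl⟩) ?_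
    unfold sdepthI
    rw [hEq]
    exact StanleyAux.sdepthSet_le_dil k hk1 _
end
end

section
/- Let $I$ be a monomial ideal in $S=\mathbb{K}[x_1,\dots,x_n]$ and let $P=(x_{i_1},\dots,x_{i_r})$ be a monomial prime ideal. Let $\varphi: S\to S(P)=\mathbb{K}[x_{i_1},\dots,x_{i_r}]$ be the $\mathbb{K}$-algebra homomorphism sending $x_i\mapsto 1$ for $i\notin\{i_1,\dots,i_r\}$ and $x_{i_j}\mapsto x_{i_j}$. Then the integral closure of the image ideal equals the image of the integral closure: $\overline{I(P)}=\overline{I}(P)$, where $J(P)$ denotes the ideal of $S(P)$ generated by $\varphi(J)$. -/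
open MvPolynomial

noncomputable section

/-- `I` is a monomial ideal: it is generated by a set of monomials. -/
def IsMonomialIdealG {K : Type*} [Field K] {σ : Type*} (I : Ideal (MvPolynomial σ K)) : Prop :=
  ∃ A : Set (σ →₀ ℕ),
    I = Ideal.span ((fun d => (monomial d (1 : K) : MvPolynomial σ K)) '' A)

/-- The integral closure of a monomial ideal `I`: the ideal generated by all monomials `u`
such that `u ^ m ∈ I ^ m` for some `m ≥ 1`. -/
def intClG {K : Type*} [Field K] {σ : Type*} (I : Ideal (MvPolynomial σ K)) :
    Ideal (MvPolynomial σ K) :=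
  Ideal.span {u | (∃ d : σ →₀ ℕ, u = monomial d (1 : K)) ∧ ∃ m : ℕ, 1 ≤ m ∧ u ^ m ∈ I ^ m}

/-- iterated sumset -/
def sumPow {σ : Type*} (A : Set (σ →₀ ℕ)) : ℕ → Set (σ →₀ ℕ)
  | 0 => {0}
  | m+1 => {s | ∃ a ∈ sumPow A m, ∃ b ∈ A, s = a + b}

lemma span_monomial_pow {K : Type*} [Field K] {σ : Type*} (A : Set (σ →₀ ℕ)) (m : ℕ) :
    (Ideal.span ((fun d => (monomial d (1 : K) : MvPolynomial σ K)) '' A)) ^ m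
      = Ideal.span ((fun d => (monomial d (1 : K) : MvPolynomial σ K)) '' sumPow A m) := by
  induction m with
  | zero =>
      simp [sumPow, Ideal.span_singleton_one]
  | succ m ih =>
      rw [pow_succ, ih, Ideal.span_mul_span']
      congr 1
      ext x
      constructor
      · rintro ⟨y, ⟨a, ha, rfl⟩, z, ⟨b, hb, rfl⟩, rfl⟩
        exact ⟨a + b, ⟨a, ha, b, hb, rfl⟩, by simp [monomial_mul]⟩
      · rintro ⟨s, ⟨a, ha, b, hb, rfl⟩, rfl⟩
        exact ⟨monomial a 1, ⟨a, ha, rfl⟩, monomial b 1, ⟨b, hb, rfl⟩, by simp [monomial_mul]⟩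

lemma mem_pow_iff {K : Type*} [Field K] {σ : Type*} (A : Set (σ →₀ ℕ)) (m : ℕ) (c : σ →₀ ℕ) :
    (monomial c (1 : K) : MvPolynomial σ K) ∈
        (Ideal.span ((fun d => (monomial d (1 : K) : MvPolynomial σ K)) '' A)) ^ m
      ↔ ∃ s ∈ sumPow A m, s ≤ c := by
  classical
  rw [span_monomial_pow, mem_ideal_span_monomial_image,
    support_monomial, if_neg (one_ne_zero : (1:K) ≠ 0)]
  simp

theorem stmt12_test : True := trivial

lemma res_sumPow {σ : Type*} {p : σ → Prop} (A : Set (σ →₀ ℕ)) (m : ℕ) :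
    ∀ s ∈ sumPow ((fun d => d.subtypeDomain p) '' A) m,
      ∃ w ∈ sumPow A m, w.subtypeDomain p = s := by
  induction m with
  | zero => rintro s hs; exact ⟨0, hs ▸ ⟨rfl, by simpa using hs.symm ▸ rfl⟩⟩
  | succ m ih =>
      rintro s ⟨a, ha, b, ⟨b', hb', rfl⟩, rfl⟩
      obtain ⟨w, hw, rfl⟩ := ih a ha
      exact ⟨w + b', ⟨w, hw, b', hb', rfl⟩, by simp [Finsupp.subtypeDomain_add]⟩

lemma phi_monomial {K : Type*} [Field K] {n : ℕ} (T : Finset (Fin n)) (d : Fin n →₀ ℕ) :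
    (aeval (fun i : Fin n => if h : i ∈ T then (X ⟨i, h⟩ : MvPolynomial {i : Fin n // i ∈ T} K) else 1))
        (monomial d (1 : K))
      = monomial (d.subtypeDomain (· ∈ T)) (1 : K) := by
  rw [aeval_monomial, map_one, one_mul, monomial_eq, map_one, one_mul]
  rw [Finsupp.prod_fintype _ _ (fun i => pow_zero _), Finsupp.prod_fintype _ _ (fun i => pow_zero _)]
  rw [← Finset.prod_mul_prod_compl T]
  have h2 : ∏ i ∈ Tᶜ, (if h : i ∈ T then (X ⟨i, h⟩ : MvPolynomial {i : Fin n // i ∈ T} K) else 1) ^ d i = 1 := by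
    apply Finset.prod_eq_one
    intro i hi
    rw [dif_neg (Finset.mem_compl.mp hi), one_pow]
  rw [h2, mul_one]
  rw [Finset.prod_attach T (fun i => (if h : i ∈ T then (X ⟨i, h⟩ : MvPolynomial {i : Fin n // i ∈ T} K) else 1) ^ d i) |>.symm]
  rw [Finset.univ_eq_attach]
  apply Finset.prod_congr rfl
  intro j _
  rw [dif_pos j.2, Finsupp.subtypeDomain_apply]

theorem stmt12 {K : Type*} [Field K] {n : ℕ} (I : Ideal (MvPolynomial (Fin n) K))
    (hI : IsMonomialIdealG I) (T : Finset (Fin n))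
    (φ : MvPolynomial (Fin n) K →ₐ[K] MvPolynomial {i : Fin n // i ∈ T} K)
    (hφ : φ = aeval (fun i : Fin n => if h : i ∈ T then (X ⟨i, h⟩ : MvPolynomial {i : Fin n // i ∈ T} K) else 1)) :
    intClG (Ideal.map φ I) = Ideal.map φ (intClG I) := by
  obtain ⟨A, hA⟩ := hI
  have hφm : ∀ d : Fin n →₀ ℕ, φ (monomial d (1:K)) = monomial (d.subtypeDomain (· ∈ T)) (1:K) := by
    intro d; rw [hφ]; exact phi_monomial T d
  have hmapI : Ideal.map φ I
      = Ideal.span ((fun d => (monomial d (1:K) : MvPolynomial {i : Fin n // i ∈ T} K)) ''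
          ((fun d : Fin n →₀ ℕ => d.subtypeDomain (· ∈ T)) '' A)) := by
    rw [hA, Ideal.map_span, ← Set.image_comp, ← Set.image_comp]
    exact congrArg Ideal.span (Set.image_congr fun d _ => hφm d)
  apply le_antisymm
  · -- intClG (map φ I) ≤ map φ (intClG I)
    rw [intClG, Ideal.span_le]
    rintro u ⟨⟨e, rfl⟩, m, hm, hpow⟩
    rw [monomial_pow, one_pow, hmapI, mem_pow_iff] at hpow
    obtain ⟨s, hs, hsle⟩ := hpow
    obtain ⟨w, hw, rfl⟩ := res_sumPow A m s hs
    set d : Fin n →₀ ℕ := Finsupp.equivFunOnFinite.symm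
      (fun i => if h : i ∈ T then e ⟨i, h⟩ else w i) with hd
    have hdapp : ∀ i, d i = if h : i ∈ T then e ⟨i, h⟩ else w i := fun i => rfl
    have hres : d.subtypeDomain (· ∈ T) = e := by
      ext j
      rw [Finsupp.subtypeDomain_apply, hdapp, dif_pos j.2]
    have hwle : w ≤ m • d := by
      intro i
      rw [Finsupp.smul_apply, smul_eq_mul, hdapp]
      by_cases h : i ∈ T
      · rw [dif_pos h]
        have := hsle ⟨i, h⟩
        rw [Finsupp.subtypeDomain_apply, Finsupp.smul_apply, smul_eq_mul] at this
        exact this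
      · rw [dif_neg h]
        calc w i = 1 * w i := (one_mul _).symm
        _ ≤ m * w i := Nat.mul_le_mul_right _ hm
    have hmem : (monomial d (1:K) : MvPolynomial (Fin n) K) ∈ intClG I := by
      apply Ideal.subset_span
      refine ⟨⟨d, rfl⟩, m, hm, ?_⟩
      rw [monomial_pow, one_pow, hA, mem_pow_iff]
      exact ⟨w, hw, hwle⟩
    have : φ (monomial d (1:K)) = monomial e (1:K) := by rw [hφm, hres]
    rw [← this]
    exact Ideal.mem_map_of_mem φ hmem
  · -- map φ (intClG I) ≤ intClG (map φ I)
    rw [intClG, Ideal.map_span, Ideal.span_le]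
    rintro x ⟨u, ⟨⟨d, rfl⟩, m, hm, hpow⟩, rfl⟩
    apply Ideal.subset_span
    refine ⟨⟨d.subtypeDomain (· ∈ T), hφm d⟩, m, hm, ?_⟩
    rw [← map_pow, ← Ideal.map_pow]
    exact Ideal.mem_map_of_mem φ hpow
end
end
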